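/- arXiv:2101.07957 — 2 statements merged into one kernel-verified Lean document; each statement's English description precedes it below -/
import Mathlib

section
/- Let V be a positive definite d×d real matrix and x₁,…,x_k ∈ ℝ^d. Then log det(V + Σ_{i=1}^k x_i x_iᵀ) ≥ log det(V) + (1/k) Σ_{i=1}^k log det(I + k · V^{-1/2} x_i (V^{-1/2} x_i)ᵀ). -/
open Matrix Finset

/-- The old Mathlib `Matrix.PosSemidef.sqrt` (removed upstream), restored with its old definition. -/
noncomputable def Matrix.PosSemidef.sqrt {n 𝕜 : Type*} [Fintype n] [RCLike 𝕜] [PartialOrder 𝕜] [DecidableEq n]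
    {A : Matrix n n 𝕜} (hA : A.PosSemidef) : Matrix n n 𝕜 :=
  hA.1.eigenvectorUnitary.1 * diagonal ((↑) ∘ (Real.sqrt ∘ hA.1.eigenvalues)) *
    (star hA.1.eigenvectorUnitary : Matrix n n 𝕜)

lemma aux_posSemidef_sqrt {n : Type*} [Fintype n] [DecidableEq n] {A : Matrix n n ℝ}
    (hA : A.PosSemidef) : hA.sqrt.PosSemidef := by
  have hD : (diagonal ((↑) ∘ (Real.sqrt ∘ hA.1.eigenvalues)) : Matrix n n ℝ).PosSemidef := by
    refine posSemidef_diagonal_iff.mpr fun i => ?_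
    simp [Real.sqrt_nonneg]
  exact hD.mul_mul_conjTranspose_same (hA.1.eigenvectorUnitary : Matrix n n ℝ)

lemma aux_sqrt_mul_self {n : Type*} [Fintype n] [DecidableEq n] {A : Matrix n n ℝ}
    (hA : A.PosSemidef) : hA.sqrt * hA.sqrt = A := by
  let C : Matrix n n ℝ := hA.1.eigenvectorUnitary
  let E := (diagonal ((↑) ∘ (Real.sqrt ∘ hA.1.eigenvalues)) : Matrix n n ℝ)
  suffices C * (E * (star C * C) * E) * star C = A by
    rw [Matrix.PosSemidef.sqrt]
    change (C * E * star C) * (C * E * star C) = A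
    simpa only [← mul_assoc] using this
  have : star C * C = 1 := by simp [C]
  rw [this, mul_one]
  have : E * E = diagonal ((↑) ∘ hA.1.eigenvalues) := by
    rw [diagonal_mul_diagonal]
    congr! with v
    simp [← pow_two, Real.sq_sqrt (hA.eigenvalues_nonneg v)]
  simpa [C, this, Function.comp_def] using hA.1.spectral_theorem.symm

lemma aux_one_add_sum_le_prod {ι : Type*} (s : Finset ι) (f : ι → ℝ)
    (hf : ∀ i ∈ s, 0 ≤ f i) : 1 + ∑ i ∈ s, f i ≤ ∏ i ∈ s, (1 + f i) := by
  induction s using Finset.cons_induction with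
  | empty => simp
  | cons a s ha ih =>
    rw [Finset.sum_cons, Finset.prod_cons]
    have h1 : 0 ≤ f a := hf a (Finset.mem_cons_self _ _)
    have h2 : ∀ i ∈ s, 0 ≤ f i := fun i hi => hf i (Finset.mem_cons_of_mem hi)
    have hs : 0 ≤ ∑ i ∈ s, f i := Finset.sum_nonneg h2
    have := ih h2
    nlinarith

lemma aux_smul_vecMulVec {m n : Type*} (c : ℝ) (u : m → ℝ) (v : n → ℝ) :
    c • vecMulVec u v = vecMulVec (c • u) v := by
  ext i j; simp [vecMulVec_apply, mul_assoc]

lemma aux_mul_vecMulVec {m n : Type*} [Fintype m] (M : Matrix n m ℝ) (u : m → ℝ) (v : m → ℝ) :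
    M * vecMulVec u v = vecMulVec (M *ᵥ u) v := by
  ext i j
  simp [Matrix.mul_apply, vecMulVec_apply, mulVec, dotProduct, Finset.sum_mul, mul_assoc]

lemma aux_vecMulVec_mul {m n : Type*} [Fintype m] (M : Matrix m n ℝ) (u : m → ℝ) (v : m → ℝ) :
    vecMulVec u v * M = vecMulVec u (Mᵀ *ᵥ v) := by
  ext i j
  simp [Matrix.mul_apply, vecMulVec_apply, mulVec, dotProduct, Finset.mul_sum, transpose_apply]
  ring_nf
  congr 1; ext l; ring

lemma aux_posSemidef_vecMulVec {n : Type*} [Fintype n] (v : n → ℝ) :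
    (vecMulVec v v).PosSemidef := by
  apply PosSemidef.of_dotProduct_mulVec_nonneg
  · ext i j; simp [conjTranspose_apply, vecMulVec_apply, mul_comm]
  · intro x
    have : (star x) ⬝ᵥ (vecMulVec v v *ᵥ x) = (v ⬝ᵥ x) * (v ⬝ᵥ x) := by
      simp only [dotProduct, mulVec, vecMulVec_apply, Finset.mul_sum, Finset.sum_mul,
        Pi.star_apply, star_trivial]
      rw [Finset.sum_comm]
      congr 1; ext i; congr 1; ext j; ring
    rw [this]
    exact mul_self_nonneg _

lemma aux_trace_vecMulVec {n : Type*} [Fintype n] (v : n → ℝ) :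
    (vecMulVec v v).trace = v ⬝ᵥ v := by
  simp [Matrix.trace, Matrix.diag, vecMulVec_apply, dotProduct]

lemma aux_det_one_add_smul_vecMulVec {n : Type*} [Fintype n] [DecidableEq n] (c : ℝ) (v : n → ℝ) :
    ((1 : Matrix n n ℝ) + c • vecMulVec v v).det = 1 + c * (v ⬝ᵥ v) := by
  rw [aux_smul_vecMulVec, vecMulVec_eq (Fin 1), det_one_add_replicateCol_mul_replicateRow]
  rw [dotProduct_smul, smul_eq_mul]

lemma aux_det_one_add_ge {n : Type*} [Fintype n] [DecidableEq n]
    {A : Matrix n n ℝ} (hA : A.PosSemidef) : 1 + A.trace ≤ ((1 : Matrix n n ℝ) + A).det := by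
  have hH := hA.isHermitian
  set U : Matrix n n ℝ := (hH.eigenvectorUnitary : Matrix n n ℝ) with hUdef
  have hU : U * star U = 1 := mem_unitaryGroup_iff.mp (hH.eigenvectorUnitary).2
  have hU' : star U * U = 1 := mem_unitaryGroup_iff'.mp (hH.eigenvectorUnitary).2
  set D : Matrix n n ℝ := diagonal (RCLike.ofReal ∘ hH.eigenvalues) with hDdef
  have hspec : A = U * D * star U := hH.spectral_theorem
  have key : (1 : Matrix n n ℝ) + A = U * (1 + D) * star U := by
    rw [Matrix.mul_add, Matrix.add_mul, Matrix.mul_one, hU, ← hspec]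
  have hdet : ((1 : Matrix n n ℝ) + A).det = ∏ i, (1 + hH.eigenvalues i) := by
    rw [key, det_mul_right_comm, hU, one_mul, hDdef]
    rw [show (1 : Matrix n n ℝ) + diagonal (RCLike.ofReal ∘ hH.eigenvalues)
        = diagonal (fun i => 1 + hH.eigenvalues i) by
      rw [← diagonal_one, diagonal_add]; congr 1]
    rw [det_diagonal]
  have htr : A.trace = ∑ i, hH.eigenvalues i := by
    conv_lhs => rw [hspec]
    rw [trace_mul_cycle, hU', one_mul, hDdef, trace_diagonal]
    simp
  rw [hdet, htr]
  exact aux_one_add_sum_le_prod Finset.univ _ (fun i _ => hA.eigenvalues_nonneg i)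

lemma aux_posSemidef_sum {ι n : Type*} [Fintype n] (s : Finset ι)
    (f : ι → Matrix n n ℝ) (hf : ∀ i ∈ s, (f i).PosSemidef) :
    (∑ i ∈ s, f i).PosSemidef := by
  induction s using Finset.cons_induction with
  | empty => simpa using Matrix.PosSemidef.zero
  | cons a s ha ih =>
    rw [Finset.sum_cons]
    exact (hf a (Finset.mem_cons_self _ _)).add (ih fun i hi => hf i (Finset.mem_cons_of_mem hi))

theorem logDet_jensen_rank_one_updates {d k : ℕ} (hk : 0 < k)
    (V : Matrix (Fin d) (Fin d) ℝ) (hV : V.PosDef) (x : Fin k → (Fin d → ℝ)) :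
    Real.log (V + ∑ i, vecMulVec (x i) (x i)).det ≥
      Real.log V.det +
        (1 / (k : ℝ)) * ∑ i, Real.log
          ((1 : Matrix (Fin d) (Fin d) ℝ) +
            (k : ℝ) • vecMulVec (hV.posSemidef.sqrt⁻¹ *ᵥ x i) (hV.posSemidef.sqrt⁻¹ *ᵥ x i)).det := by
  classical
  have hk0 : (k : ℝ) ≠ 0 := Nat.cast_ne_zero.mpr hk.ne'
  set S := hV.posSemidef.sqrt with hSdef
  have hS : S.PosSemidef := aux_posSemidef_sqrt hV.posSemidef
  have hSS : S * S = V := aux_sqrt_mul_self hV.posSemidef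
  have hdetS : S.det * S.det = V.det := by rw [← det_mul, hSS]
  have hdetSne : S.det ≠ 0 := by
    intro h; rw [h, mul_zero] at hdetS; exact hV.det_pos.ne' hdetS.symm
  have hUnit : IsUnit S.det := hdetSne.isUnit
  set W := S⁻¹ with hWdef
  have hSW : S * W = 1 := mul_nonsing_inv S hUnit
  have hWS : W * S = 1 := nonsing_inv_mul S hUnit
  have hSt : Sᵀ = S := by
    have := hS.isHermitian
    ext i j
    simpa [conjTranspose_apply] using congr_fun (congr_fun this i) j
  set w : Fin k → (Fin d → ℝ) := fun i => W *ᵥ x i with hwdef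
  set s : Fin k → ℝ := fun i => (w i) ⬝ᵥ (w i) with hsdef
  have hs0 : ∀ i, 0 ≤ s i := fun i => Finset.sum_nonneg fun j _ => mul_self_nonneg _
  -- decompose
  have hconj : ∀ i, S * vecMulVec (w i) (w i) * S = vecMulVec (x i) (x i) := by
    intro i
    rw [aux_mul_vecMulVec, aux_vecMulVec_mul, hSt, hwdef]
    simp only [mulVec_mulVec, hSW, one_mulVec]
  set M := (1 : Matrix (Fin d) (Fin d) ℝ) + ∑ i, vecMulVec (w i) (w i) with hMdef
  have hkey : V + ∑ i, vecMulVec (x i) (x i) = S * M * S := by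
    rw [hMdef, Matrix.mul_add, Matrix.add_mul, Matrix.mul_one, hSS, Finset.mul_sum,
      Finset.sum_mul]
    congr 1
    exact (Finset.sum_congr rfl fun i _ => hconj i).symm
  have hMpsd : (∑ i, vecMulVec (w i) (w i)).PosSemidef :=
    aux_posSemidef_sum _ _ fun i _ => aux_posSemidef_vecMulVec (w i)
  have hMpos : M.PosDef := Matrix.PosDef.one.add_posSemidef hMpsd
  have hdet : (V + ∑ i, vecMulVec (x i) (x i)).det = V.det * M.det := by
    rw [hkey, det_mul, det_mul, ← hdetS]; ring
  -- trace bound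
  have htr : (∑ i, vecMulVec (w i) (w i)).trace = ∑ i, s i := by
    rw [trace_sum]
    exact Finset.sum_congr rfl fun i _ => aux_trace_vecMulVec (w i)
  have hMge : 1 + ∑ i, s i ≤ M.det := by
    rw [← htr, hMdef]; exact aux_det_one_add_ge hMpsd
  -- scalar dets on RHS
  have hrhs : ∀ i, ((1 : Matrix (Fin d) (Fin d) ℝ)
      + (k : ℝ) • vecMulVec (hV.posSemidef.sqrt⁻¹ *ᵥ x i) (hV.posSemidef.sqrt⁻¹ *ᵥ x i)).det
      = 1 + (k : ℝ) * s i := by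
    intro i
    rw [aux_det_one_add_smul_vecMulVec]
  have hz : ∀ i : Fin k, (0 : ℝ) < 1 + (k : ℝ) * s i := by
    intro i
    have : 0 ≤ (k : ℝ) * s i := mul_nonneg (Nat.cast_nonneg k) (hs0 i)
    linarith
  -- AM-GM
  have hgm : ∏ i : Fin k, (1 + (k : ℝ) * s i) ^ ((1 : ℝ)/k)
      ≤ ∑ i : Fin k, (1/(k:ℝ)) * (1 + (k : ℝ) * s i) := by
    apply Real.geom_mean_le_arith_mean_weighted
    · intro i _; positivity
    · simp [Finset.sum_const, Finset.card_univ]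
      field_simp
    · intro i _; exact (hz i).le
  have hsum_eq : ∑ i : Fin k, (1/(k:ℝ)) * (1 + (k : ℝ) * s i) = 1 + ∑ i, s i := by
    have : ∀ i : Fin k, (1/(k:ℝ)) * (1 + (k : ℝ) * s i) = 1/(k:ℝ) + s i := by
      intro i; field_simp
    rw [Finset.sum_congr rfl fun i _ => this i, Finset.sum_add_distrib]
    simp [Finset.sum_const, Finset.card_univ]
    field_simp
  have hprodpos : 0 < ∏ i : Fin k, (1 + (k : ℝ) * s i) ^ ((1 : ℝ)/k) :=
    Finset.prod_pos fun i _ => Real.rpow_pos_of_pos (hz i) _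
  -- log chain
  have hlog1 : (1 / (k : ℝ)) * ∑ i, Real.log (1 + (k : ℝ) * s i)
      = Real.log (∏ i : Fin k, (1 + (k : ℝ) * s i) ^ ((1 : ℝ)/k)) := by
    rw [Real.log_prod fun i _ => (Real.rpow_pos_of_pos (hz i) _).ne',
      Finset.mul_sum]
    exact Finset.sum_congr rfl fun i _ => (Real.log_rpow (hz i) _).symm
  have hsumpos : (0:ℝ) < 1 + ∑ i, s i := by
    have : 0 ≤ ∑ i, s i := Finset.sum_nonneg fun i _ => hs0 i
    linarith
  have hchain : (1 / (k : ℝ)) * ∑ i, Real.log (1 + (k : ℝ) * s i) ≤ Real.log M.det := by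
    rw [hlog1]
    apply Real.log_le_log hprodpos
    calc ∏ i : Fin k, (1 + (k : ℝ) * s i) ^ ((1 : ℝ)/k)
        ≤ ∑ i : Fin k, (1/(k:ℝ)) * (1 + (k : ℝ) * s i) := hgm
      _ = 1 + ∑ i, s i := hsum_eq
      _ ≤ M.det := hMge
  rw [hdet, Real.log_mul hV.det_pos.ne' hMpos.det_pos.ne']
  simp only [← hSdef, ← hWdef] at hrhs
  simp only [hrhs]
  linarith
end

section
/- Let λ > 0 and let x_t(i) ∈ ℝ^d for t ∈ [T], i ∈ [k] satisfy ‖x_t(i)‖₂ ≤ L. Define V_t = λI + Σ_{s=1}^t Σ_{i=1}^k x_s(i) x_s(i)ᵀ. Then Σ_{t=1}^T Σ_{i=1}^k min(1/k, x_t(i)ᵀ V_{t-1}^{-1} x_t(i)) ≤ 2d · log(1 + L²kT/(dλ)). -/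
open Matrix

variable {d : ℕ}

-- trace = sum of eigenvalues
lemma trace_eq_sum_eig {A : Matrix (Fin d) (Fin d) ℝ} (hA : A.IsHermitian) :
    A.trace = ∑ i, hA.eigenvalues i := by
  conv_lhs => rw [hA.spectral_theorem, Unitary.conjStarAlgAut_apply]
  rw [trace_mul_comm, ← mul_assoc, (Matrix.mem_unitaryGroup_iff').mp (hA.eigenvectorUnitary).2,
    one_mul, trace_diagonal]
  simp

-- product inequality
lemma one_add_sum_le_prod {ι : Type*} (s : Finset ι) (f : ι → ℝ) (hf : ∀ i ∈ s, 1 ≤ f i) :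
    1 + ∑ i ∈ s, (f i - 1) ≤ ∏ i ∈ s, f i := by
  induction s using Finset.cons_induction with
  | empty => simp
  | cons a s ha ih =>
    rw [Finset.sum_cons, Finset.prod_cons]
    have h1 : 1 ≤ f a := hf a (Finset.mem_cons_self a s)
    have hs : ∀ i ∈ s, 1 ≤ f i := fun i hi => hf i (Finset.mem_cons_of_mem hi)
    have h2 : (0:ℝ) ≤ ∑ i ∈ s, (f i - 1) := Finset.sum_nonneg fun i hi => by linarith [hs i hi]
    have h3 := ih hs
    nlinarith [h3, h1, h2]

lemma det_one_add_ge {W : Matrix (Fin d) (Fin d) ℝ} (hW : W.PosSemidef) :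
    1 + W.trace ≤ (1 + W).det := by
  have hH : (1 + W).IsHermitian := Matrix.isHermitian_one.add hW.1
  have hmu : ∀ i, 1 ≤ hH.eigenvalues i := by
    intro i
    set v := ⇑(hH.eigenvectorBasis i) with hv
    have hnorm : star v ⬝ᵥ v = 1 := by
      have h1 : ‖hH.eigenvectorBasis i‖ = 1 := hH.eigenvectorBasis.orthonormal.1 i
      have h2 : (star v) ⬝ᵥ v = (inner ℝ (hH.eigenvectorBasis i) (hH.eigenvectorBasis i) : ℝ) := by
        rw [EuclideanSpace.inner_eq_star_dotProduct, dotProduct_comm]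
      rw [h2, real_inner_self_eq_norm_sq, h1]; norm_num
    have hmv : (1 + W) *ᵥ v = hH.eigenvalues i • v := hH.mulVec_eigenvectorBasis i
    have hWv : W *ᵥ v = (hH.eigenvalues i - 1) • v := by
      have : (1 + W) *ᵥ v = v + W *ᵥ v := by
        rw [Matrix.add_mulVec, Matrix.one_mulVec]
      rw [this] at hmv
      rw [sub_smul, one_smul, ← hmv]
      abel
    have hpos := hW.dotProduct_mulVec_nonneg v
    rw [hWv, dotProduct_smul, smul_eq_mul, hnorm, mul_one] at hpos
    linarith
  have hdet : (1 + W).det = ∏ i, hH.eigenvalues i := by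
    have := hH.det_eq_prod_eigenvalues
    push_cast at this
    exact this
  have htr : (1 + W).trace = ∑ i, hH.eigenvalues i := trace_eq_sum_eig hH
  have htr2 : W.trace = ∑ i, (hH.eigenvalues i - 1) := by
    have h1 : (1 + W).trace = (1 : Matrix (Fin d) (Fin d) ℝ).trace + W.trace := trace_add _ _
    have h2 : (1 : Matrix (Fin d) (Fin d) ℝ).trace = (d : ℝ) := by simp [trace_one]
    rw [h1, h2] at htr
    rw [Finset.sum_sub_distrib]
    simp only [Finset.sum_const, Finset.card_univ, Fintype.card_fin, nsmul_eq_mul, mul_one]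
    linarith
  rw [hdet, htr2]
  exact one_add_sum_le_prod _ _ (fun i _ => hmu i)

lemma prod_le_avg_pow {f : Fin d → ℝ} (hd : 0 < d) (hf : ∀ i, 0 < f i) :
    ∏ i, f i ≤ ((∑ i, f i) / d) ^ d := by
  have hd' : (0:ℝ) < d := by exact_mod_cast hd
  have h := Real.geom_mean_le_arith_mean_weighted Finset.univ (fun _ => 1 / (d:ℝ)) f
    (fun i _ => by positivity) (by simp [Finset.card_univ]; field_simp)
    (fun i _ => (hf i).le)
  -- h : ∏ i, f i ^ (1/d : ℝ) ≤ ∑ i, (1/d) * f i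
  have hprod : ∏ i, f i ^ ((1:ℝ)/d) = (∏ i, f i) ^ ((1:ℝ)/d) := by
    rw [← Real.finset_prod_rpow _ _ (fun i _ => (hf i).le)]
  have hsum : ∑ i : Fin d, (1/(d:ℝ)) * f i = (∑ i, f i) / d := by
    rw [← Finset.mul_sum]; ring
  rw [hprod, hsum] at h
  have hP : (0:ℝ) < ∏ i, f i := Finset.prod_pos (fun i _ => hf i)
  calc ∏ i, f i = ((∏ i, f i) ^ ((1:ℝ)/d)) ^ (d:ℕ) := by
        rw [← Real.rpow_natCast ((∏ i, f i) ^ ((1:ℝ)/d)) d, ← Real.rpow_mul hP.le]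
        field_simp
        rw [Real.rpow_one]
    _ ≤ ((∑ i, f i) / d) ^ (d:ℕ) := by
        apply pow_le_pow_left₀ (Real.rpow_nonneg hP.le _) h

lemma det_le_avg_trace_pow {M : Matrix (Fin d) (Fin d) ℝ} (hd : 0 < d) (hM : M.PosDef) :
    M.det ≤ (M.trace / d) ^ d := by
  have h1 : M.det = ∏ i, hM.1.eigenvalues i := by
    have := hM.1.det_eq_prod_eigenvalues
    push_cast at this; exact this
  have h2 : M.trace = ∑ i, hM.1.eigenvalues i := trace_eq_sum_eig hM.1
  rw [h1, h2]
  exact prod_le_avg_pow hd (fun i => hM.eigenvalues_pos i)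

lemma trace_vecMulVec_mul (x : Fin d → ℝ) (M : Matrix (Fin d) (Fin d) ℝ) :
    (vecMulVec x x * M).trace = x ⬝ᵥ M *ᵥ x := by
  simp only [trace, diag, mul_apply, vecMulVec_apply, dotProduct, mulVec, dotProduct]
  rw [Finset.sum_comm]
  apply Finset.sum_congr rfl
  intro j _
  rw [Finset.mul_sum]
  apply Finset.sum_congr rfl
  intro i _
  ring

lemma trace_vecMulVec (x : Fin d → ℝ) : (vecMulVec x x).trace = ∑ j, (x j)^2 := by
  simp [trace, diag, vecMulVec_apply, sq]

lemma posSemidef_vecMulVec (x : Fin d → ℝ) : (vecMulVec x x).PosSemidef := by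
  apply PosSemidef.of_dotProduct_mulVec_nonneg
  · ext i j
    simp [vecMulVec_apply, conjTranspose_apply, mul_comm]
  · intro y
    have : star y ⬝ᵥ (vecMulVec x x) *ᵥ y = (∑ j, x j * y j) ^ 2 := by
      simp only [dotProduct, mulVec, vecMulVec_apply, star, Pi.star_apply, star_trivial, sq,
        dotProduct]
      rw [Finset.sum_mul]
      apply Finset.sum_congr rfl
      intro i _
      rw [Finset.mul_sum, Finset.mul_sum]
      apply Finset.sum_congr rfl
      intro j _
      ring
    rw [this]
    positivity

open scoped MatrixOrder in
lemma det_step {V A : Matrix (Fin d) (Fin d) ℝ} (hV : V.PosDef) (hA : A.PosSemidef) :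
    V.det * (1 + (A * V⁻¹).trace) ≤ (V + A).det := by
  set S := CFC.sqrt V with hSdef
  have hSS : S * S = V := CFC.sqrt_mul_sqrt_self V hV.posSemidef.nonneg
  have hSherm : S.IsHermitian := (CFC.sqrt_nonneg V).posSemidef.1
  have hdetS : S.det * S.det = V.det := by rw [← det_mul, hSS]
  have hdetV : 0 < V.det := hV.det_pos
  have hdetSne : S.det ≠ 0 := by
    intro h; rw [h, mul_zero] at hdetS; exact hdetV.ne (hdetS)
  have hSunit : IsUnit S.det := isUnit_iff_ne_zero.mpr hdetSne
  have hSinv : S * S⁻¹ = 1 := mul_nonsing_inv S hSunit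
  have hSinv' : S⁻¹ * S = 1 := nonsing_inv_mul S hSunit
  have hSinvherm : (S⁻¹).IsHermitian := by
    unfold Matrix.IsHermitian
    rw [conjTranspose_nonsing_inv, hSherm.eq]
  set W := S⁻¹ * A * S⁻¹ with hWdef
  have hWpsd : W.PosSemidef := by
    have := hA.conjTranspose_mul_mul_same (B := S⁻¹)
    rwa [hSinvherm.eq] at this
  have hdecomp : V + A = S * (1 + W) * S := by
    rw [hWdef]
    rw [mul_add, add_mul, mul_one, hSS]
    congr 1
    symm
    calc S * (S⁻¹ * A * S⁻¹) * S = (S * S⁻¹) * A * (S⁻¹ * S) := by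
          simp only [Matrix.mul_assoc]
      _ = A := by rw [hSinv, hSinv', Matrix.one_mul, Matrix.mul_one]
  have htrW : W.trace = (A * V⁻¹).trace := by
    rw [hWdef, trace_mul_comm (S⁻¹ * A) (S⁻¹), ← Matrix.mul_assoc,
      ← Matrix.mul_inv_rev, hSS, trace_mul_comm]
  have hkey := det_one_add_ge hWpsd
  rw [htrW] at hkey
  calc V.det * (1 + (A * V⁻¹).trace) ≤ V.det * (1 + W).det :=
        mul_le_mul_of_nonneg_left hkey hdetV.le
    _ = (V + A).det := by
        rw [hdecomp, det_mul, det_mul, mul_comm S.det, mul_assoc, ← hdetS]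
        ring

lemma posSemidef_sum {ι : Type*} (s : Finset ι) (f : ι → Matrix (Fin d) (Fin d) ℝ)
    (hf : ∀ i ∈ s, (f i).PosSemidef) : (∑ i ∈ s, f i).PosSemidef := by
  induction s using Finset.cons_induction with
  | empty => simpa using Matrix.PosSemidef.zero
  | cons a s ha ih =>
    rw [Finset.sum_cons]
    exact (hf a (Finset.mem_cons_self a s)).add (ih fun i hi => hf i (Finset.mem_cons_of_mem hi))

lemma min_one_le_two_log {s : ℝ} (hs : 0 ≤ s) : min 1 s ≤ 2 * Real.log (1 + s) := by
  have h1 : (0:ℝ) < 1 + s := by linarith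
  have hlog : 1 - 1/(1+s) ≤ Real.log (1 + s) := by
    have := Real.log_le_sub_one_of_pos (show (0:ℝ) < 1/(1+s) by positivity)
    rw [Real.log_div one_ne_zero h1.ne', Real.log_one] at this
    linarith
  have hfrac : s / (1+s) ≤ Real.log (1+s) := by
    have : 1 - 1/(1+s) = s/(1+s) := by field_simp; ring
    linarith [hlog, this.symm.le]
  rcases le_total s 1 with h | h
  · rw [min_eq_right h]
    have h2 : s / 2 ≤ s / (1+s) := by
      apply div_le_div_of_nonneg_left hs h1 (by linarith)
    linarith
  · rw [min_eq_left h]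
    have : s / (1+s) ≥ 1/2 := by
      rw [ge_iff_le, div_le_div_iff₀ (by norm_num) h1]
      linarith
    linarith

theorem elliptic_potential_batched {d k T : ℕ} (hd : 0 < d) (hk : 0 < k)
    (L lam : ℝ) (hlam : 0 < lam) (x : ℕ → ℕ → (Fin d → ℝ))
    (hL : ∀ t ∈ Finset.range T, ∀ i ∈ Finset.range k, Real.sqrt (∑ j, (x t i j) ^ 2) ≤ L)
    (V : ℕ → Matrix (Fin d) (Fin d) ℝ)
    (hV : ∀ t, V t = lam • (1 : Matrix (Fin d) (Fin d) ℝ) +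
      ∑ s ∈ Finset.range t, ∑ i ∈ Finset.range k, vecMulVec (x s i) (x s i)) :
    ∑ t ∈ Finset.range T, ∑ i ∈ Finset.range k,
        min (1 / (k : ℝ)) (x t i ⬝ᵥ (V t)⁻¹ *ᵥ x t i) ≤
      2 * d * Real.log (1 + L ^ 2 * k * T / (d * lam)) := by
  rcases Nat.eq_zero_or_pos T with hT0 | hT
  · subst hT0; simp
  have hd' : (0:ℝ) < d := by exact_mod_cast hd
  have hk' : (0:ℝ) < k := by exact_mod_cast hk
  have hL0 : 0 ≤ L :=
    le_trans (Real.sqrt_nonneg _) (hL 0 (Finset.mem_range.mpr hT) 0 (Finset.mem_range.mpr hk))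
  set A : ℕ → Matrix (Fin d) (Fin d) ℝ :=
    fun t => ∑ i ∈ Finset.range k, vecMulVec (x t i) (x t i) with hA
  have hApsd : ∀ t, (A t).PosSemidef :=
    fun t => posSemidef_sum _ _ (fun i _ => posSemidef_vecMulVec (x t i))
  have hVpd : ∀ t, (V t).PosDef := by
    intro t
    rw [hV t]
    apply Matrix.PosDef.add_posSemidef
    · rw [Matrix.smul_one_eq_diagonal]
      exact Matrix.PosDef.diagonal (fun _ => hlam)
    · exact posSemidef_sum _ _ (fun s _ => posSemidef_sum _ _
        (fun i _ => posSemidef_vecMulVec (x s i)))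
  set u : ℕ → ℕ → ℝ := fun t i => x t i ⬝ᵥ (V t)⁻¹ *ᵥ x t i with hu
  have hunn : ∀ t i, 0 ≤ u t i := by
    intro t i
    have := ((hVpd t).inv).posSemidef.dotProduct_mulVec_nonneg (x t i)
    simpa using this
  have hVsucc : ∀ t, V (t + 1) = V t + A t := by
    intro t
    rw [hV (t+1), hV t, Finset.sum_range_succ, ← add_assoc]
  have htrace : ∀ t, (A t * (V t)⁻¹).trace = ∑ i ∈ Finset.range k, u t i := by
    intro t
    rw [hA]
    simp only
    rw [Finset.sum_mul, trace_sum]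
    exact Finset.sum_congr rfl fun i _ => trace_vecMulVec_mul _ _
  have hstep : ∀ t, (V t).det * (1 + ∑ i ∈ Finset.range k, u t i) ≤ (V (t+1)).det := by
    intro t
    rw [← htrace t, hVsucc t]
    exact det_step (hVpd t) (hApsd t)
  -- per-round bound
  have hround : ∀ t, ∑ i ∈ Finset.range k, min (1 / (k:ℝ)) (u t i) ≤
      2 * (Real.log (V (t+1)).det - Real.log (V t).det) := by
    intro t
    set s := ∑ i ∈ Finset.range k, u t i with hs
    have hsnn : 0 ≤ s := Finset.sum_nonneg fun i _ => hunn t i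
    have h1 : ∑ i ∈ Finset.range k, min (1 / (k:ℝ)) (u t i) ≤ min 1 s := by
      apply le_min
      · calc ∑ i ∈ Finset.range k, min (1 / (k:ℝ)) (u t i)
            ≤ ∑ i ∈ Finset.range k, 1 / (k:ℝ) :=
              Finset.sum_le_sum fun i _ => min_le_left _ _
          _ = 1 := by
              rw [Finset.sum_const, Finset.card_range, nsmul_eq_mul]
              field_simp
      · exact le_trans (Finset.sum_le_sum fun i _ => min_le_right _ _) le_rfl
    have h2 : min 1 s ≤ 2 * Real.log (1 + s) := min_one_le_two_log hsnn
    have h3 : Real.log (1 + s) ≤ Real.log (V (t+1)).det - Real.log (V t).det := by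
      have hdt : 0 < (V t).det := (hVpd t).det_pos
      have hdt1 : 0 < (V (t+1)).det := (hVpd (t+1)).det_pos
      have hle : 1 + s ≤ (V (t+1)).det / (V t).det := by
        rw [le_div_iff₀ hdt]
        linarith [hstep t, mul_comm ((V t).det) (1 + s)]
      calc Real.log (1 + s) ≤ Real.log ((V (t+1)).det / (V t).det) :=
            Real.log_le_log (by linarith) hle
        _ = Real.log (V (t+1)).det - Real.log (V t).det :=
            Real.log_div hdt1.ne' hdt.ne'
    linarith
  -- sum and telescope
  have hsum : ∑ t ∈ Finset.range T, ∑ i ∈ Finset.range k, min (1 / (k:ℝ)) (u t i) ≤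
      2 * (Real.log (V T).det - Real.log (V 0).det) := by
    calc ∑ t ∈ Finset.range T, ∑ i ∈ Finset.range k, min (1 / (k:ℝ)) (u t i)
        ≤ ∑ t ∈ Finset.range T, 2 * (Real.log (V (t+1)).det - Real.log (V t).det) :=
          Finset.sum_le_sum fun t _ => hround t
      _ = 2 * ∑ t ∈ Finset.range T, (Real.log (V (t+1)).det - Real.log (V t).det) := by
          rw [Finset.mul_sum]
      _ = 2 * (Real.log (V T).det - Real.log (V 0).det) := by
          rw [Finset.sum_range_sub (fun t => Real.log (V t).det)]
  -- initial determinant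
  have hdet0 : (V 0).det = lam ^ d := by
    rw [hV 0]
    simp [Matrix.det_smul]
  -- trace bound at time T
  have htrT : (V T).trace ≤ d * lam + L^2 * k * T := by
    rw [hV T, trace_add, trace_smul, trace_one]
    simp only [hA, trace_sum, smul_eq_mul, Fintype.card_fin]
    have hbd : ∀ t ∈ Finset.range T, ∑ i ∈ Finset.range k, (vecMulVec (x t i) (x t i)).trace
        ≤ k * L^2 := by
      intro t ht
      calc ∑ i ∈ Finset.range k, (vecMulVec (x t i) (x t i)).trace
          ≤ ∑ i ∈ Finset.range k, L^2 := by
            apply Finset.sum_le_sum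
            intro i hi
            rw [_root_.trace_vecMulVec]
            have h1 := hL t ht i hi
            have h2 : ∑ j, (x t i j)^2 = (Real.sqrt (∑ j, (x t i j)^2))^2 := by
              rw [Real.sq_sqrt (Finset.sum_nonneg fun j _ => sq_nonneg _)]
            rw [h2]
            exact pow_le_pow_left₀ (Real.sqrt_nonneg _) h1 2
        _ = k * L^2 := by rw [Finset.sum_const, Finset.card_range, nsmul_eq_mul]
    calc lam * (d:ℝ) + ∑ t ∈ Finset.range T, ∑ i ∈ Finset.range k,
          (vecMulVec (x t i) (x t i)).trace
        ≤ lam * (d:ℝ) + ∑ t ∈ Finset.range T, (k:ℝ) * L^2 := by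
          gcongr with t ht
          · exact hbd t ht
      _ = d * lam + L^2 * k * T := by
          rw [Finset.sum_const, Finset.card_range, nsmul_eq_mul]; ring
  -- final determinant bound
  set c : ℝ := lam + L^2 * k * T / d with hc
  have hcpos : 0 < c := by positivity
  have hlogT : Real.log (V T).det ≤ d * Real.log c := by
    have h1 : (V T).det ≤ ((V T).trace / d) ^ d := det_le_avg_trace_pow hd (hVpd T)
    have htrnn : 0 ≤ (V T).trace / d := by
      have htr : 0 ≤ (V T).trace := by
        rw [trace_eq_sum_eig (hVpd T).1]
        exact Finset.sum_nonneg fun i _ => ((hVpd T).eigenvalues_pos i).le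
      positivity
    have h2 : (V T).trace / d ≤ c := by
      rw [hc, div_le_iff₀ hd']
      have := htrT
      field_simp
      linarith [htrT]
    have h3 : (V T).det ≤ c ^ d := le_trans h1 (pow_le_pow_left₀ htrnn h2 d)
    calc Real.log (V T).det ≤ Real.log (c ^ d) :=
          Real.log_le_log (hVpd T).det_pos h3
      _ = d * Real.log c := by rw [Real.log_pow]
  have hfinal : 2 * (Real.log (V T).det - Real.log (V 0).det) ≤
      2 * d * Real.log (1 + L ^ 2 * k * T / (d * lam)) := by
    have h0 : Real.log (V 0).det = d * Real.log lam := by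
      rw [hdet0, Real.log_pow]
    have harg : c / lam = 1 + L ^ 2 * k * T / (d * lam) := by
      rw [hc, add_div, div_self hlam.ne', div_div]
    have : Real.log c - Real.log lam = Real.log (1 + L ^ 2 * k * T / (d * lam)) := by
      rw [← Real.log_div hcpos.ne' hlam.ne', harg]
    calc 2 * (Real.log (V T).det - Real.log (V 0).det)
        ≤ 2 * (d * Real.log c - d * Real.log lam) := by
          rw [h0]; linarith [hlogT]
      _ = 2 * d * (Real.log c - Real.log lam) := by ring
      _ = 2 * d * Real.log (1 + L ^ 2 * k * T / (d * lam)) := by rw [this]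
  exact le_trans hsum hfinal
end
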